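/- arXiv:1805.08891 — 4 statements merged into one kernel-verified Lean document; each statement's English description precedes it below -/
import Mathlib

section
/- One-step coarse-graining increases discrete differential entropy: Let S satisfy strong subadditivity. Given subsets R_1,…,R_n of an index set (indices cyclic mod n) and shrunken subsets R̃_i ⊆ R_i such that for each i the sets R_i \ R_{i+1}, R̃_i ∩ R̃_{i+1}, and R_i \ R̃_i are pairwise disjoint with union R_i, and R_i ∩ R_{i+1} = (R̃_i ∩ R̃_{i+1}) ∪ (R_i \ R̃_i) and R̃_i = (R_i \ R_{i+1}) ∪ (R̃_i ∩ R̃_{i+1}), then Σ_i [S(R_i) − S(R_i ∩ R_{i+1})] ≤ Σ_i [S(R̃_i) − S(R̃_i ∩ R̃_{i+1})]. -/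
open Finset

/-- One-step coarse-graining increases discrete differential entropy.
Regions `R i` and shrunken regions `Rt i ⊆ R i` are indexed cyclically by `ZMod n`.
For each `i`, with `A = R i \ R (i+1)`, `B = Rt i ∩ Rt (i+1)`, `C = R i \ Rt i`
pairwise disjoint with union `R i`, and `R i ∩ R (i+1) = B ∪ C`, `Rt i = A ∪ B`,
strong subadditivity of `S` implies the discrete differential entropy does not
decrease when passing from `{R i}` to `{Rt i}`. -/
theorem discrete_diff_entropy_increase {ι : Type*} [DecidableEq ι]
    (S : Finset ι → ℝ)
    (hSSA : ∀ A B C : Finset ι, Disjoint A B → Disjoint B C → Disjoint A C →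
      S (A ∪ B ∪ C) + S B ≤ S (A ∪ B) + S (C ∪ B))
    (n : ℕ) [NeZero n] (R Rt : ZMod n → Finset ι)
    (hsub : ∀ i, Rt i ⊆ R i)
    (hAB : ∀ i, Disjoint (R i \ R (i + 1)) (Rt i ∩ Rt (i + 1)))
    (hBC : ∀ i, Disjoint (Rt i ∩ Rt (i + 1)) (R i \ Rt i))
    (hAC : ∀ i, Disjoint (R i \ R (i + 1)) (R i \ Rt i))
    (hunion : ∀ i, (R i \ R (i + 1)) ∪ (Rt i ∩ Rt (i + 1)) ∪ (R i \ Rt i) = R i)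
    (hint : ∀ i, R i ∩ R (i + 1) = (Rt i ∩ Rt (i + 1)) ∪ (R i \ Rt i))
    (hRt : ∀ i, Rt i = (R i \ R (i + 1)) ∪ (Rt i ∩ Rt (i + 1))) :
    ∑ i : ZMod n, (S (R i) - S (R i ∩ R (i + 1))) ≤
      ∑ i : ZMod n, (S (Rt i) - S (Rt i ∩ Rt (i + 1))) := by
  apply Finset.sum_le_sum
  intro i _
  have h := hSSA (R i \ R (i + 1)) (Rt i ∩ Rt (i + 1)) (R i \ Rt i)
    (hAB i) (hBC i) (hAC i)
  rw [hunion i] at h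
  have hCB : (R i \ Rt i) ∪ (Rt i ∩ Rt (i + 1)) = R i ∩ R (i + 1) := by
    rw [hint i, Finset.union_comm]
  rw [hCB, ← hRt i] at h
  linarith
end

section
/- Signature criterion for the hypersurface swept out by the mixed-signature differential entropy curves: writing sgn(χ²) = sgn[6 sin²(Δv/2) + sin²((Δu + Δv)/2) − 2 sin²(Δu/2)], the quantity 6 sin²(Δv/2) + sin²((Δu+Δv)/2) − 2 sin²(Δu/2) is positive for Δu sufficiently close to 0 and to 2π − |Δv|, and there exists Δu ∈ (0, 2π − |Δv|) where it is negative if and only if −2 arcsin(√2/3) < Δv < 0 (for Δv ∈ (−2π, 0)). -/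
open Real Set

/-- key trig identity -/
lemma sig_gid (u v : ℝ) :
    6 * sin (v / 2) ^ 2 + sin ((u + v) / 2) ^ 2 - 2 * sin (u / 2) ^ 2 =
      (5 / 2 - 3 * cos v) + (1 - cos v / 2) * cos u + (sin v / 2) * sin u := by
  have h : ∀ x : ℝ, sin (x / 2) ^ 2 = 1 / 2 - cos x / 2 := by
    intro x
    have h2 : (2 : ℝ) * (x / 2) = x := by ring
    rw [Real.sin_sq_eq_half_sub, h2]
  rw [h u, h v, h (u + v), Real.cos_add]
  ring

/-- Cauchy–Schwarz style bound -/
lemma sig_cs (A B u : ℝ) : (A * cos u + B * sin u) ^ 2 ≤ A ^ 2 + B ^ 2 := by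
  nlinarith [sq_nonneg (A * sin u - B * cos u), Real.sin_sq_add_cos_sq u]

/-- positivity persists in a neighborhood -/
lemma sig_pos_nhds (v x : ℝ)
    (h : 0 < 6 * sin (v / 2) ^ 2 + sin ((x + v) / 2) ^ 2 - 2 * sin (x / 2) ^ 2) :
    ∃ ε > 0, ∀ u : ℝ, |u - x| < ε →
      0 < 6 * sin (v / 2) ^ 2 + sin ((u + v) / 2) ^ 2 - 2 * sin (u / 2) ^ 2 := by
  have hc : Continuous
      (fun u : ℝ => 6 * sin (v / 2) ^ 2 + sin ((u + v) / 2) ^ 2 - 2 * sin (u / 2) ^ 2) := by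
    fun_prop
  have hev := ContinuousAt.eventually_lt continuousAt_const hc.continuousAt h
  rw [Metric.eventually_nhds_iff] at hev
  obtain ⟨ε, hε, hb⟩ := hev
  exact ⟨ε, hε, fun u hu => hb (by rwa [Real.dist_eq])⟩

/-- arithmetic: in the regime `c ≤ 5/9` the quantity is globally nonnegative -/
lemma sig_arith_case1 (c R X : ℝ) (hc59 : c ≤ 5 / 9) (hc1 : c ≤ 1)
    (hR2 : R ^ 2 = 5 / 4 - c) (hRnn : 0 ≤ R) (hX2 : X ^ 2 ≤ 5 / 4 - c) :
    0 ≤ 5 / 2 - 3 * c + X := by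
  have hCpos : (0:ℝ) ≤ 5 / 2 - 3 * c := by linarith
  have h1 : R ≤ 5 / 2 - 3 * c := by
    by_contra hcon
    push_neg at hcon
    nlinarith [mul_self_lt_mul_self hCpos hcon,
      mul_nonneg (show (0:ℝ) ≤ 5 - 9 * c by linarith) (show (0:ℝ) ≤ 1 - c by linarith)]
  have h2 : -R ≤ X := by
    by_contra hcon
    push_neg at hcon
    have hXneg : R < -X := by linarith
    nlinarith [mul_self_lt_mul_self hRnn hXneg]
  linarith

/-- arithmetic: convex-combination positivity for the chord bound -/
lemma sig_chord (C A B cL sL t cu su : ℝ) (h0 : 0 < C + A)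
    (hL : 0 < C + A * cL + B * sL) (ht0 : 0 ≤ t) (ht1 : t ≤ 1)
    (hA : 0 ≤ A) (hB : 0 ≤ B)
    (hcu : (1 - t) * 1 + t * cL ≤ cu) (hsu : (1 - t) * 0 + t * sL ≤ su) :
    0 < C + A * cu + B * su := by
  have hm1 := mul_le_mul_of_nonneg_left hcu hA
  have hm2 := mul_le_mul_of_nonneg_left hsu hB
  rcases le_total t (1 / 2) with h | h
  · nlinarith [mul_nonneg (show (0:ℝ) ≤ 1 / 2 - t by linarith) h0.le,
      mul_nonneg ht0 hL.le]
  · nlinarith [mul_nonneg (show (0:ℝ) ≤ t - 1 / 2 by linarith) hL.le,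
      mul_nonneg (show (0:ℝ) ≤ 1 - t by linarith) h0.le]

/-- arithmetic: the value at the right endpoint is positive -/
lemma sig_fL (c sv : ℝ) (h1 : c < 1) (hm : -1 ≤ c) (hs : sv ^ 2 = 1 - c ^ 2) :
    0 < (5 / 2 - 3 * c) + (1 - c / 2) * c + (sv / 2) * sv := by
  nlinarith [mul_pos (show (0:ℝ) < 3 + c by linarith) (show (0:ℝ) < 1 - c by linarith)]

/-- arithmetic: `C < R` when `5/9 < c < 1` -/
lemma sig_CR (c R : ℝ) (h59 : 5 / 9 < c) (h1 : c < 1)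
    (hR2 : R ^ 2 = 5 / 4 - c) (hR : 0 < R) : 5 / 2 - 3 * c < R := by
  have hC2 : (5 / 2 - 3 * c) ^ 2 < R ^ 2 := by
    nlinarith [mul_pos (show (0:ℝ) < 9 * c - 5 by linarith) (show (0:ℝ) < 1 - c by linarith)]
  by_contra hcon
  push_neg at hcon
  nlinarith [mul_self_le_mul_self hR.le hcon]

/-- arithmetic: `-sv/2 < R` -/
lemma sig_xlt (c sv R : ℝ) (h1 : c < 1) (hsv2 : sv ^ 2 = 1 - c ^ 2)
    (hR2 : R ^ 2 = 5 / 4 - c) (hR : 0 < R) : -sv / 2 < R := by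
  have h2 : (-sv / 2) ^ 2 < R ^ 2 := by
    nlinarith [mul_pos (show (0:ℝ) < 2 - c by linarith) (show (0:ℝ) < 2 - c by linarith)]
  by_contra hcon
  push_neg at hcon
  nlinarith [mul_self_le_mul_self hR.le hcon]

set_option maxHeartbeats 1000000 in
/-- Signature criterion for the hypersurface swept out by the mixed-signature
differential-entropy curves.  With
`g(Δu) = 6 sin²(Δv/2) + sin²((Δu+Δv)/2) − 2 sin²(Δu/2)` and
`Δv ∈ (−2π, 0)` fixed: `g` is positive for `Δu` sufficiently close to `0` and
to `2π − |Δv|`, and there exists `Δu ∈ (0, 2π − |Δv|)` where `g` is negative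
if and only if `−2 arcsin(√2/3) < Δv`. -/
theorem signature_criterion (Δv : ℝ) (hv : Δv ∈ Ioo (-(2 * π)) (0 : ℝ)) :
    (∃ ε > 0, ∀ Δu ∈ Ioo (0 : ℝ) ε,
        0 < 6 * sin (Δv / 2) ^ 2 + sin ((Δu + Δv) / 2) ^ 2 - 2 * sin (Δu / 2) ^ 2) ∧
    (∃ ε > 0, ∀ Δu ∈ Ioo (2 * π - |Δv| - ε) (2 * π - |Δv|),
        0 < 6 * sin (Δv / 2) ^ 2 + sin ((Δu + Δv) / 2) ^ 2 - 2 * sin (Δu / 2) ^ 2) ∧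
    ((∃ Δu ∈ Ioo (0 : ℝ) (2 * π - |Δv|),
        6 * sin (Δv / 2) ^ 2 + sin ((Δu + Δv) / 2) ^ 2 - 2 * sin (Δu / 2) ^ 2 < 0)
      ↔ -(2 * arcsin (Real.sqrt 2 / 3)) < Δv) := by
  obtain ⟨hv1, hv2⟩ := hv
  have hpi := Real.pi_pos
  have habs : |Δv| = -Δv := abs_of_neg hv2
  have hLe : 2 * π - |Δv| = 2 * π + Δv := by rw [habs]; ring
  have hsvh : sin (Δv / 2) < 0 :=
    Real.sin_neg_of_neg_of_neg_pi_lt (by linarith) (by linarith)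
  have hhalf : sin (Δv / 2) ^ 2 = 1 / 2 - cos Δv / 2 := by
    have h2 : (2 : ℝ) * (Δv / 2) = Δv := by ring
    rw [Real.sin_sq_eq_half_sub, h2]
  have hc1 : cos Δv < 1 := by
    have hp := mul_pos_of_neg_of_neg hsvh hsvh
    nlinarith [hhalf]
  have hcm1 : -1 ≤ cos Δv := Real.neg_one_le_cos Δv
  have hL0 : (0 : ℝ) < 2 * π + Δv := by linarith
  have hsinL : sin (2 * π + Δv) = sin Δv := by rw [add_comm, Real.sin_add_two_pi]
  have hcosL : cos (2 * π + Δv) = cos Δv := by rw [add_comm, Real.cos_add_two_pi]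
  have hsv2 : sin Δv ^ 2 = 1 - cos Δv ^ 2 := by
    linear_combination Real.sin_sq_add_cos_sq Δv
  have hf0 : 0 < 6 * sin (Δv / 2) ^ 2 + sin (((0:ℝ) + Δv) / 2) ^ 2
      - 2 * sin ((0:ℝ) / 2) ^ 2 := by
    rw [sig_gid, Real.cos_zero, Real.sin_zero]
    linarith
  have hfL : 0 < 6 * sin (Δv / 2) ^ 2 + sin (((2 * π + Δv) + Δv) / 2) ^ 2
      - 2 * sin ((2 * π + Δv) / 2) ^ 2 := by
    rw [sig_gid, hcosL, hsinL]
    exact sig_fL _ _ hc1 hcm1 hsv2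
  refine ⟨?_, ?_, ?_⟩
  · obtain ⟨ε, hε, hball⟩ := sig_pos_nhds Δv 0 hf0
    refine ⟨ε, hε, fun u hu => hball u ?_⟩
    rw [sub_zero, abs_of_pos hu.1]
    exact hu.2
  · obtain ⟨ε, hε, hball⟩ := sig_pos_nhds Δv (2 * π + Δv) hfL
    rw [hLe]
    refine ⟨ε, hε, fun u hu => hball u ?_⟩
    rw [abs_lt]
    exact ⟨by linarith [hu.1], by linarith [hu.2]⟩
  · rw [hLe]
    have hs2 : Real.sqrt 2 ^ 2 = 2 := Real.sq_sqrt (by norm_num)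
    have hs2n : 0 ≤ Real.sqrt 2 := Real.sqrt_nonneg 2
    have hs2p : 0 < Real.sqrt 2 := Real.sqrt_pos.2 (by norm_num)
    have hb1 : (-1 : ℝ) ≤ Real.sqrt 2 / 3 := by linarith
    have hb2 : Real.sqrt 2 / 3 ≤ 1 := by nlinarith [hs2, hs2n]
    have hsa : sin (arcsin (Real.sqrt 2 / 3)) = Real.sqrt 2 / 3 :=
      Real.sin_arcsin hb1 hb2
    have hsasq : sin (arcsin (Real.sqrt 2 / 3)) ^ 2 = 2 / 9 := by
      rw [hsa, div_pow, hs2]; norm_num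
    have hcos2a : cos (2 * arcsin (Real.sqrt 2 / 3)) = 5 / 9 := by
      rw [Real.cos_two_mul]
      have := Real.sin_sq_add_cos_sq (arcsin (Real.sqrt 2 / 3))
      linarith [hsasq]
    have ha0 : 0 < arcsin (Real.sqrt 2 / 3) := Real.arcsin_pos.2 (by positivity)
    have ha4 : arcsin (Real.sqrt 2 / 3) < π / 4 := by
      refine (Real.arcsin_lt_iff_lt_sin ⟨hb1, hb2⟩
        ⟨by linarith, by linarith⟩).2 ?_
      rw [Real.sin_pi_div_four]
      linarith [hs2p]
    constructor
    · rintro ⟨u, hu, hneg⟩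
      by_contra hcon
      push_neg at hcon
      have hneg' : (5 / 2 - 3 * cos Δv) + (1 - cos Δv / 2) * cos u
          + (sin Δv / 2) * sin u < 0 := by rw [← sig_gid]; exact hneg
      rcases le_or_gt (cos Δv) (5 / 9) with hcase | hcase
      · have hcs := sig_cs (1 - cos Δv / 2) (sin Δv / 2) u
        have hRnn : 0 ≤ Real.sqrt (5 / 4 - cos Δv) := Real.sqrt_nonneg _
        have hR2 : Real.sqrt (5 / 4 - cos Δv) ^ 2 = 5 / 4 - cos Δv :=
          Real.sq_sqrt (by linarith)
        have hRsq : (1 - cos Δv / 2) ^ 2 + (sin Δv / 2) ^ 2 = 5 / 4 - cos Δv := by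
          linear_combination hsv2 / 4
        have hX2 : ((1 - cos Δv / 2) * cos u + (sin Δv / 2) * sin u) ^ 2
            ≤ 5 / 4 - cos Δv := by linarith
        have := sig_arith_case1 (cos Δv) (Real.sqrt (5 / 4 - cos Δv)) _
          hcase hc1.le hR2 hRnn hX2
        linarith
      · have hpiv : π < -Δv := by
          by_contra hnp
          push_neg at hnp
          have h2a : 2 * arcsin (Real.sqrt 2 / 3) ≤ -Δv := by linarith
          have hle := Real.cos_le_cos_of_nonneg_of_le_pi (by linarith) hnp h2a
          rw [Real.cos_neg, hcos2a] at hle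
          linarith
        have hLpi : 2 * π + Δv < π := by linarith
        have hLlt : 2 * π + Δv < 2 * arcsin (Real.sqrt 2 / 3) := by
          by_contra hge
          push_neg at hge
          have hle := Real.cos_le_cos_of_nonneg_of_le_pi (by linarith) hLpi.le hge
          rw [hcosL, hcos2a] at hle
          linarith
        have hsinLpos : 0 < sin (2 * π + Δv) :=
          Real.sin_pos_of_pos_of_lt_pi hL0 hLpi
        have hsvpos : 0 < sin Δv := by rw [← hsinL]; exact hsinLpos
        have ht0 : 0 < u / (2 * π + Δv) := div_pos hu.1 hL0
        have ht1 : u / (2 * π + Δv) < 1 := (div_lt_one hL0).2 hu.2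
        have harg : u / (2 * π + Δv) * (2 * π + Δv) = u := div_mul_cancel₀ u hL0.ne'
        have hch1 : (1 - u / (2 * π + Δv)) * 1 + (u / (2 * π + Δv)) * cos (2 * π + Δv)
            ≤ cos u := by
          have := strictConcaveOn_cos_Icc.concaveOn.2
            (x := 0) (y := 2 * π + Δv)
            ⟨by linarith, by linarith⟩ ⟨by linarith, by linarith⟩
            (by linarith : (0:ℝ) ≤ 1 - u / (2 * π + Δv)) ht0.le (by ring)
          simpa [smul_eq_mul, harg, Real.cos_zero] using this
        have hch2 : (1 - u / (2 * π + Δv)) * 0 + (u / (2 * π + Δv)) * sin (2 * π + Δv)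
            ≤ sin u := by
          have := strictConcaveOn_sin_Icc.concaveOn.2
            (x := 0) (y := 2 * π + Δv)
            ⟨le_refl 0, by linarith⟩ ⟨by linarith, by linarith⟩
            (by linarith : (0:ℝ) ≤ 1 - u / (2 * π + Δv)) ht0.le (by ring)
          simpa [smul_eq_mul, harg, Real.sin_zero] using this
        have h0pos : (0:ℝ) < (5 / 2 - 3 * cos Δv) + (1 - cos Δv / 2) := by linarith
        have hLpos : (0:ℝ) < (5 / 2 - 3 * cos Δv)
            + (1 - cos Δv / 2) * cos (2 * π + Δv) + (sin Δv / 2) * sin (2 * π + Δv) := by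
          rw [hcosL, hsinL]
          exact sig_fL _ _ hc1 hcm1 hsv2
        have := sig_chord (5 / 2 - 3 * cos Δv) (1 - cos Δv / 2) (sin Δv / 2)
          (cos (2 * π + Δv)) (sin (2 * π + Δv)) (u / (2 * π + Δv)) (cos u) (sin u)
          h0pos hLpos ht0.le ht1.le (by linarith) (by linarith) hch1 hch2
        linarith
    · intro hgt
      have h2api : 2 * arcsin (Real.sqrt 2 / 3) < π / 2 := by linarith
      have hc59 : 5 / 9 < cos Δv := by
        have hlt := Real.cos_lt_cos_of_nonneg_of_le_pi
          (show (0:ℝ) ≤ -Δv by linarith) (by linarith)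
          (show -Δv < 2 * arcsin (Real.sqrt 2 / 3) by linarith)
        rw [Real.cos_neg, hcos2a] at hlt
        linarith
      have hsvneg : sin Δv < 0 :=
        Real.sin_neg_of_neg_of_neg_pi_lt hv2 (by linarith)
      obtain ⟨R, hRdef⟩ : ∃ R, R = Real.sqrt (5 / 4 - cos Δv) := ⟨_, rfl⟩
      have hRpos : 0 < R := hRdef ▸ Real.sqrt_pos.2 (by linarith)
      have hR2 : R ^ 2 = 5 / 4 - cos Δv := hRdef ▸ Real.sq_sqrt (by linarith)
      have hCR : 5 / 2 - 3 * cos Δv < R := sig_CR _ _ hc59 hc1 hR2 hRpos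
      have hxlt : -sin Δv / 2 < R := sig_xlt _ _ _ hc1 hsv2 hR2 hRpos
      have hx0 : 0 < -sin Δv / 2 / R := div_pos (by linarith) hRpos
      have hx1 : -sin Δv / 2 / R < 1 := (div_lt_one hRpos).2 hxlt
      have harc0 : 0 < arcsin (-sin Δv / 2 / R) := Real.arcsin_pos.2 hx0
      have harc2 : arcsin (-sin Δv / 2 / R) < π / 2 := Real.arcsin_lt_pi_div_two.2 hx1
      refine ⟨π - arcsin (-sin Δv / 2 / R), ⟨by linarith, by linarith⟩, ?_⟩
      rw [sig_gid, Real.sin_pi_sub, Real.cos_pi_sub,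
        Real.sin_arcsin (by linarith) hx1.le, Real.cos_arcsin]
      have hxs : (1 : ℝ) - (-sin Δv / 2 / R) ^ 2 = ((1 - cos Δv / 2) / R) ^ 2 := by
        have hRne : R ≠ 0 := hRpos.ne'
        field_simp
        linear_combination (4 : ℝ) * hR2 - hsv2
      rw [hxs, Real.sqrt_sq (div_nonneg (by linarith) hRpos.le)]
      have hval : (5 / 2 - 3 * cos Δv) + (1 - cos Δv / 2) * -((1 - cos Δv / 2) / R)
          + sin Δv / 2 * (-sin Δv / 2 / R) = (5 / 2 - 3 * cos Δv) - R := by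
        have hRne : R ≠ 0 := hRpos.ne'
        field_simp
        linear_combination (4 : ℝ) * hR2 - hsv2
      rw [hval]
      linarith
end

section
/- In a time-oriented Lorentzian manifold, if a hypersurface H is foliated by compact codimension-two surfaces σ(r) such that σ(r₂) is never timelike-separated from σ(r₁) for r₂ > r₁, then the normal vector field h^a within H pointing in the direction of increasing r is nowhere timelike. -/
/-- If a hypersurface in Minkowski spacetime `ℝ × E` (time × space, with two
points timelike-separated iff `‖Δx‖ < |Δt|`) is foliated by compact
codimension-two leaves `σ(r)` such that no point of `σ(r₂)` is
timelike-separated from any point of `σ(r₁)` for `r₂ > r₁`, then the normal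
flow field within the hypersurface in the direction of increasing `r`
(the velocity of any differentiable curve `γ` with `γ(r) ∈ σ(r)`) is nowhere
timelike: `|(γ'(r))_t| ≤ ‖(γ'(r))_x‖`. -/
theorem foliation_flow_not_timelike {E : Type*} [NormedAddCommGroup E]
    [InnerProductSpace ℝ E]
    (σ : ℝ → Set (ℝ × E)) (hcpt : ∀ r, IsCompact (σ r))
    (hsep : ∀ r₁ r₂, r₁ < r₂ → ∀ p ∈ σ r₁, ∀ q ∈ σ r₂, ¬ ‖q.2 - p.2‖ < |q.1 - p.1|)
    (γ : ℝ → ℝ × E) (hγ : Differentiable ℝ γ) (hmem : ∀ r, γ r ∈ σ r) :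
    ∀ r, |(deriv γ r).1| ≤ ‖(deriv γ r).2‖ := by
  intro r
  have hd : HasDerivAt γ (deriv γ r) r := (hγ r).hasDerivAt
  have hslope : Filter.Tendsto (slope γ r) (nhdsWithin r {r}ᶜ) (nhds (deriv γ r)) :=
    hasDerivAt_iff_tendsto_slope.mp hd
  have key : ∀ s ∈ ({r}ᶜ : Set ℝ), |(slope γ r s).1| ≤ ‖(slope γ r s).2‖ := by
    intro s hs
    have hne : s ≠ r := hs
    have hineq : |(γ s).1 - (γ r).1| ≤ ‖(γ s).2 - (γ r).2‖ := by
      rcases lt_or_gt_of_ne hne with h | h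
      · have := hsep s r h (γ s) (hmem s) (γ r) (hmem r)
        push_neg at this
        rwa [abs_sub_comm, norm_sub_rev]
      · have := hsep r s h (γ r) (hmem r) (γ s) (hmem s)
        push_neg at this
        exact this
    have h1 : (slope γ r s).1 = (s - r)⁻¹ * ((γ s).1 - (γ r).1) := rfl
    have h2 : (slope γ r s).2 = (s - r)⁻¹ • ((γ s).2 - (γ r).2) := rfl
    rw [h1, h2, abs_mul, norm_smul, Real.norm_eq_abs]
    exact mul_le_mul_of_nonneg_left hineq (abs_nonneg _)
  have t1 : Filter.Tendsto (fun s => |(slope γ r s).1|) (nhdsWithin r {r}ᶜ)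
      (nhds |(deriv γ r).1|) := ((continuous_fst.continuousAt.tendsto.comp hslope).abs)
  have t2 : Filter.Tendsto (fun s => ‖(slope γ r s).2‖) (nhdsWithin r {r}ᶜ)
      (nhds ‖(deriv γ r).2‖) := ((continuous_snd.continuousAt.tendsto.comp hslope).norm)
  exact le_of_tendsto_of_tendsto t1 t2 (eventually_mem_nhdsWithin.mono key)
end

section
/- Discriminant sign computation: treating 6 sin²(Δv/2) + sin²((Δu + Δv)/2) − 2 sin²(Δu/2) = 0 as a quadratic equation in X = sin²(Δu/2) (after expanding sin²((Δu+Δv)/2) using angle-addition and expressing in terms of X and fixed Δv), the sign of the discriminant of this quadratic equals the sign of 2 − 9 sin²(Δv/2). -/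
open Real

lemma sign_mul_pos_left {K x : ℝ} (hK : 0 < K) : Real.sign (K * x) = Real.sign x := by
  rcases lt_trichotomy x 0 with h | h | h
  · rw [Real.sign_of_neg h, Real.sign_of_neg (mul_neg_of_pos_of_neg hK h)]
  · simp [h]
  · rw [Real.sign_of_pos h, Real.sign_of_pos (mul_pos hK h)]

/-- Discriminant sign computation: treating the vanishing condition
`6 sin²(Δv/2) + sin²((Δu+Δv)/2) − 2 sin²(Δu/2) = 0` as a quadratic in
`X = sin²(Δu/2)` (after expanding by angle addition, isolating the square root
and squaring, one gets `a X² + b X + c = 0` with the coefficients below), the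
sign of its discriminant equals the sign of `2 − 9 sin²(Δv/2)`. -/
theorem discriminant_sign (Δv : ℝ)
    (hs : Real.sin (Δv / 2) ≠ 0) (hc : Real.cos (Δv / 2) ≠ 0)
    (a b c : ℝ)
    (ha : a = (1 + 2 * sin (Δv / 2) ^ 2) ^ 2 + sin Δv ^ 2)
    (hb : b = -(14 * sin (Δv / 2) ^ 2 * (1 + 2 * sin (Δv / 2) ^ 2) + sin Δv ^ 2))
    (hc' : c = 49 * sin (Δv / 2) ^ 4) :
    Real.sign (b ^ 2 - 4 * a * c) = Real.sign (2 - 9 * sin (Δv / 2) ^ 2) := by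
  set s := Real.sin (Δv / 2) with hsdef
  have hsin : Real.sin Δv = 2 * s * Real.cos (Δv / 2) := by
    rw [hsdef, ← Real.sin_two_mul]; ring_nf
  have hcos : Real.cos (Δv / 2) ^ 2 = 1 - s ^ 2 := by
    rw [hsdef, Real.cos_sq']
  have key : b ^ 2 - 4 * a * c =
      (64 * s ^ 2 * (s ^ 2 * (1 - s ^ 2))) * (2 - 9 * s ^ 2) := by
    subst ha hb hc'
    rw [hsin]
    linear_combination (16 * s ^ 4 * Real.cos (Δv / 2) ^ 2 - 576 * s ^ 6 + 128 * s ^ 4) * hcos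
  rw [key]
  apply sign_mul_pos_left
  have h1 : 0 < s ^ 2 := by positivity
  have h2 : 0 < 1 - s ^ 2 := by rw [← hcos]; positivity
  positivity
end
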